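/- arXiv:2503.02100 — 2 statements merged into one kernel-verified Lean document; each statement's English description precedes it below -/
import Mathlib

section
/- Let n be a positive integer, let X ⊆ ℤ_n be a finite nonempty set, and let K ≥ 1 be a real number such that |X + X| ≤ K|X|. Then the Freiman dimension of X satisfies dim_f(X) < 2K. -/
open Pointwise

/-- A Freiman isomorphism between finite subsets of abelian groups: a bijection `φ : A → B`
such that `a + b = a' + b' ↔ φ a + φ b = φ a' + φ b'` for all `a, b, a', b' ∈ A`. -/
def IsFreimanIso {G H : Type*} [AddCommGroup G] [AddCommGroup H]
    (A : Finset G) (B : Finset H) : Prop :=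
  ∃ φ : G → H, Set.BijOn φ ↑A ↑B ∧
    ∀ a ∈ A, ∀ b ∈ A, ∀ a' ∈ A, ∀ b' ∈ A,
      (a + b = a' + b' ↔ φ a + φ b = φ a' + φ b')

/-- A finite subset of `ℤ^d` has full rank if it affinely spans `ℝ^d`. -/
def FullRank {d : ℕ} (B : Finset (Fin d → ℤ)) : Prop :=
  affineSpan ℝ ((fun v : Fin d → ℤ => fun i => (v i : ℝ)) '' ↑B) = ⊤

/-- The Freiman dimension of a finite set `A`: the largest `d` for which there is a
full-rank subset of `ℤ^d` Freiman isomorphic to `A`. -/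
noncomputable def freimanDim {G : Type*} [AddCommGroup G] (A : Finset G) : ℕ :=
  sSup {d : ℕ | ∃ B : Finset (Fin d → ℤ), FullRank B ∧ IsFreimanIso A B}


open Module Finset

theorem exists_nonvanishing_functional {D : ℕ} (W : Finset (Fin D → ℝ)) (hW : ∀ w ∈ W, w ≠ 0) :
    ∃ f : (Fin D → ℝ) →ₗ[ℝ] ℝ, ∀ w ∈ W, f w ≠ 0 := by
  classical
  induction W using Finset.induction_on with
  | empty => exact ⟨0, by simp⟩
  | @insert w₀ W hw₀W ih =>
    obtain ⟨f, hf⟩ := ih (fun w hw => hW w (Finset.mem_insert_of_mem hw))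
    have hw₀ : w₀ ≠ 0 := hW w₀ (Finset.mem_insert_self _ _)
    have : ¬ (∀ φ : Module.Dual ℝ (Fin D → ℝ), φ w₀ = 0) := by
      rw [forall_dual_apply_eq_zero_iff]; exact hw₀
    push_neg at this
    obtain ⟨g, hg⟩ := this
    obtain ⟨t, ht⟩ := Infinite.exists_notMem_finset
      ((insert w₀ W).image (fun w => -f w / g w))
    refine ⟨f + t • g, fun w hw => ?_⟩
    intro hzero
    simp only [LinearMap.add_apply, LinearMap.smul_apply, smul_eq_mul] at hzero
    by_cases hgw : g w = 0
    · rcases Finset.mem_insert.mp hw with rfl | hw'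
      · exact hg hgw
      · rw [hgw, mul_zero, add_zero] at hzero
        exact hf w hw' hzero
    · apply ht
      refine Finset.mem_image.mpr ⟨w, hw, ?_⟩
      field_simp
      linarith [hzero]

theorem exists_injOn_functional {D : ℕ} (A : Finset (Fin D → ℝ)) :
    ∃ f : (Fin D → ℝ) →ₗ[ℝ] ℝ, Set.InjOn f (A : Set (Fin D → ℝ)) := by
  classical
  set W : Finset (Fin D → ℝ) :=
    ((A ×ˢ A).filter (fun p => p.1 ≠ p.2)).image (fun p => p.1 - p.2) with hWdef
  have hW : ∀ w ∈ W, w ≠ 0 := by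
    intro w hw
    obtain ⟨p, hp, rfl⟩ := Finset.mem_image.mp hw
    exact sub_ne_zero.mpr (Finset.mem_filter.mp hp).2
  obtain ⟨f, hf⟩ := exists_nonvanishing_functional W hW
  refine ⟨f, fun x hx y hy hxy => ?_⟩
  by_contra hne
  refine hf (x - y) ?_ (by rw [map_sub, hxy, sub_self])
  exact Finset.mem_image.mpr ⟨(x, y), Finset.mem_filter.mpr
    ⟨Finset.mk_mem_product (by exact_mod_cast hx) (by exact_mod_cast hy), hne⟩, rfl⟩

theorem rank_le_erase_rank_add_one {D : ℕ} (A : Finset (Fin D → ℝ)) (v : Fin D → ℝ)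
    {a₀ : Fin D → ℝ} (ha₀ : a₀ ∈ A.erase v) :
    finrank ℝ (vectorSpan ℝ (A : Set (Fin D → ℝ))) ≤
      finrank ℝ (vectorSpan ℝ (A.erase v : Set (Fin D → ℝ))) + 1 := by
  classical
  have ha₀A : a₀ ∈ A := Finset.mem_of_mem_erase ha₀
  have hle : vectorSpan ℝ (A : Set (Fin D → ℝ)) ≤
      vectorSpan ℝ (A.erase v : Set (Fin D → ℝ)) ⊔ Submodule.span ℝ {v - a₀} := by
    rw [vectorSpan_eq_span_vsub_set_right ℝ (show a₀ ∈ (A : Set (Fin D → ℝ)) by exact_mod_cast ha₀A)]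
    rw [Submodule.span_le]
    rintro w ⟨x, hx, rfl⟩
    by_cases hxv : x = v
    · subst hxv
      exact Submodule.mem_sup_right (Submodule.subset_span (by simp [vsub_eq_sub]))
    · refine Submodule.mem_sup_left (vsub_mem_vectorSpan ℝ ?_ ?_)
      · exact_mod_cast Finset.mem_erase.mpr ⟨hxv, by exact_mod_cast hx⟩
      · exact_mod_cast ha₀
  refine le_trans (Submodule.finrank_mono hle) ?_
  refine le_trans (Submodule.finrank_add_le_finrank_add_finrank _ _) ?_
  gcongr
  by_cases h0 : v - a₀ = (0 : Fin D → ℝ)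
  · rw [h0, Submodule.span_zero_singleton, finrank_bot]; omega
  · rw [finrank_span_singleton h0]

theorem visibility {D : ℕ} (A' : Finset (Fin D → ℝ)) (hA' : A'.Nonempty) (v : Fin D → ℝ)
    (f : (Fin D → ℝ) →ₗ[ℝ] ℝ) (hf : ∀ x ∈ A', f x < f v) :
    ∃ T : Finset (Fin D → ℝ), T ⊆ A' ∧
      finrank ℝ (vectorSpan ℝ (A' : Set (Fin D → ℝ))) ≤ T.card ∧
      ∀ x ∈ T, v + x ∉ A' + A' := by
  classical
  set ψ : (Fin D → ℝ) → ℝ := fun x => f v - f x with hψdef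
  have hψpos : ∀ x ∈ A', 0 < ψ x := fun x hx => sub_pos.mpr (hf x hx)
  set hat : (Fin D → ℝ) → (Fin D → ℝ) := fun x => (ψ x)⁻¹ • (x - v) with hhatdef
  set Sh : Finset (Fin D → ℝ) := A'.image hat with hShdef
  set C : Set (Fin D → ℝ) := convexHull ℝ (Sh : Set (Fin D → ℝ)) with hCdef
  set E : Set (Fin D → ℝ) := C.extremePoints ℝ with hEdef
  have hE_sub : E ⊆ (Sh : Set (Fin D → ℝ)) := extremePoints_convexHull_subset
  have hEfin : E.Finite := Sh.finite_toSet.subset hE_sub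
  have hCcomp : IsCompact C := Sh.finite_toSet.isCompact_convexHull ℝ
  have hconvE : convexHull ℝ E = C := by
    have h1 := closure_convexHull_extremePoints hCcomp (convex_convexHull ℝ _)
    have h2 : IsClosed (convexHull ℝ E) := hEfin.isClosed_convexHull ℝ
    rw [← h1, h2.closure_eq]
  set Efin : Finset (Fin D → ℝ) := hEfin.toFinset with hEfindef
  have hEfin_coe : (Efin : Set (Fin D → ℝ)) = E := hEfin.coe_toFinset
  -- affine span equality
  have hspan : affineSpan ℝ E = affineSpan ℝ (Sh : Set (Fin D → ℝ)) := by
    apply le_antisymm (affineSpan_mono ℝ hE_sub)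
    calc affineSpan ℝ (Sh : Set (Fin D → ℝ)) ≤ affineSpan ℝ C :=
          affineSpan_mono ℝ (subset_convexHull ℝ _)
      _ = affineSpan ℝ (convexHull ℝ E) := by rw [hconvE]
      _ = affineSpan ℝ E := affineSpan_convexHull E
  -- rank chain
  have hr1 : vectorSpan ℝ (A' : Set (Fin D → ℝ)) ≤ Submodule.span ℝ (Sh : Set (Fin D → ℝ)) := by
    rw [vectorSpan_def]
    rw [Submodule.span_le]
    rintro w hw
    rw [Set.mem_vsub] at hw
    obtain ⟨x, hx, y, hy, rfl⟩ := hw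
    have hmem : ∀ z ∈ A', z - v ∈ Submodule.span ℝ (Sh : Set (Fin D → ℝ)) := by
      intro z hz
      have : z - v = (ψ z) • hat z := by
        rw [hhatdef]
        rw [smul_smul, mul_inv_cancel₀ (hψpos z hz).ne', one_smul]
      rw [this]
      exact Submodule.smul_mem _ _ (Submodule.subset_span (by
        simp only [hShdef, coe_image, Set.mem_image]; exact ⟨z, hz, rfl⟩))
    have : x -ᵥ y = (x - v) - (y - v) := by simp [vsub_eq_sub]
    rw [this]
    exact Submodule.sub_mem _ (hmem x hx) (hmem y hy)
  have hSh_ne : Sh.Nonempty := hA'.image hat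
  obtain ⟨p₀, hp₀⟩ := hA'.image hat
  have hr2 : Submodule.span ℝ (Sh : Set (Fin D → ℝ)) ≤
      vectorSpan ℝ (Sh : Set (Fin D → ℝ)) ⊔ Submodule.span ℝ {p₀} := by
    rw [Submodule.span_le]
    intro w hw
    have : w = (w - p₀) + p₀ := by ring
    rw [this]
    refine Submodule.add_mem _ (Submodule.mem_sup_left ?_) (Submodule.mem_sup_right
      (Submodule.subset_span rfl))
    exact vsub_mem_vectorSpan ℝ hw (by exact_mod_cast hp₀)
  have hvsE : vectorSpan ℝ E = vectorSpan ℝ (Sh : Set (Fin D → ℝ)) := by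
    rw [← direction_affineSpan ℝ E, ← direction_affineSpan ℝ (Sh : Set (Fin D → ℝ)), hspan]
  have hE_ne : E.Nonempty := by
    rcases hSh_ne with ⟨q, hq⟩
    by_contra h
    rw [Set.not_nonempty_iff_eq_empty] at h
    have hCe : C = ∅ := by rw [← hconvE, h, convexHull_empty]
    have hqC : q ∈ C := subset_convexHull ℝ _ (by exact_mod_cast hq)
    rw [hCe] at hqC
    exact hqC
  have hEfin_ne : Efin.Nonempty := by
    rcases hE_ne with ⟨q, hq⟩; exact ⟨q, hEfin.mem_toFinset.mpr hq⟩
  have hcard : finrank ℝ (vectorSpan ℝ (A' : Set (Fin D → ℝ))) ≤ Efin.card := by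
    have h1 : finrank ℝ (vectorSpan ℝ (A' : Set (Fin D → ℝ))) ≤
        finrank ℝ (Submodule.span ℝ (Sh : Set (Fin D → ℝ))) := Submodule.finrank_mono hr1
    have h2 : finrank ℝ (Submodule.span ℝ (Sh : Set (Fin D → ℝ))) ≤
        finrank ℝ (vectorSpan ℝ (Sh : Set (Fin D → ℝ))) + 1 := by
      refine le_trans (Submodule.finrank_mono hr2) ?_
      refine le_trans (Submodule.finrank_add_le_finrank_add_finrank _ _) ?_
      gcongr
      by_cases h0 : p₀ = (0 : Fin D → ℝ)
      · subst h0
        rw [Submodule.span_zero_singleton, finrank_bot]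
        omega
      · rw [finrank_span_singleton h0]
    have h3 : finrank ℝ (vectorSpan ℝ (Sh : Set (Fin D → ℝ))) + 1 ≤ Efin.card := by
      rw [← hvsE, ← hEfin_coe]
      obtain ⟨m, hm⟩ := Nat.exists_eq_add_of_lt hEfin_ne.card_pos
      have := finrank_vectorSpan_image_finset_le ℝ (id : (Fin D → ℝ) → (Fin D → ℝ)) Efin
        (n := Efin.card - 1) (by omega)
      rw [Finset.image_id] at this
      omega
    omega
  -- choice of fiber maximizer
  have hfiber : ∀ p ∈ Efin, ∃ x, x ∈ A' ∧ hat x = p ∧ ∀ y ∈ A', hat y = p → f y ≤ f x := by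
    intro p hp
    have hpSh : p ∈ Sh := by
      have : p ∈ E := by rwa [← hEfin_coe]; 
      exact_mod_cast hE_sub this
    obtain ⟨x₀, hx₀, hx₀p⟩ := Finset.mem_image.mp hpSh
    set F : Finset (Fin D → ℝ) := A'.filter (fun y => hat y = p) with hFdef
    have hFne : F.Nonempty := ⟨x₀, Finset.mem_filter.mpr ⟨hx₀, hx₀p⟩⟩
    obtain ⟨x, hxF, hxmax⟩ := F.exists_max_image f hFne
    rw [Finset.mem_filter] at hxF
    exact ⟨x, hxF.1, hxF.2, fun y hy hyp => hxmax y (Finset.mem_filter.mpr ⟨hy, hyp⟩)⟩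
  set g : (Fin D → ℝ) → (Fin D → ℝ) := fun p =>
    if h : ∃ x, x ∈ A' ∧ hat x = p ∧ ∀ y ∈ A', hat y = p → f y ≤ f x then h.choose else v
    with hgdef
  have hg : ∀ p ∈ Efin, g p ∈ A' ∧ hat (g p) = p ∧ ∀ y ∈ A', hat y = p → f y ≤ f (g p) := by
    intro p hp
    have h := hfiber p hp
    simp only [hgdef, dif_pos h]
    exact h.choose_spec
  refine ⟨Efin.image g, ?_, ?_, ?_⟩
  · intro x hx
    obtain ⟨p, hp, rfl⟩ := Finset.mem_image.mp hx
    exact (hg p hp).1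
  · refine le_trans hcard ?_
    rw [Finset.card_image_of_injOn]
    intro p hp q hq hpq
    rw [← (hg p (by exact_mod_cast hp)).2.1, ← (hg q (by exact_mod_cast hq)).2.1, hpq]
  · rintro x hx hsum
    obtain ⟨p, hp, rfl⟩ := Finset.mem_image.mp hx
    obtain ⟨hgA, hgp, hgmax⟩ := hg p hp
    set x := g p
    rw [Finset.mem_add] at hsum
    obtain ⟨y, hy, z, hz, hyz⟩ := hsum
    -- ψ y + ψ z = ψ x
    have hψsum : ψ y + ψ z = ψ x := by
      have : f y + f z = f v + f x := by
        have : f (y + z) = f (v + x) := by rw [hyz]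
        simpa [map_add] using this
      simp only [hψdef]; linarith
    have hψx := hψpos x hgA
    have hψy := hψpos y hy
    have hψz := hψpos z hz
    -- p ∈ openSegment (hat y) (hat z)
    have hxv : x - v = (y - v) + (z - v) := by linear_combination hyz.symm
    have hseg : p ∈ openSegment ℝ (hat y) (hat z) := by
      refine ⟨ψ y / ψ x, ψ z / ψ x, by positivity, by positivity, ?_, ?_⟩
      · field_simp
        linarith
      · rw [← hgp]
        simp only [hhatdef]
        rw [smul_smul, smul_smul]
        have hc1 : ψ y / ψ x * (ψ y)⁻¹ = (ψ x)⁻¹ := by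
          field_simp
        have hc2 : ψ z / ψ x * (ψ z)⁻¹ = (ψ x)⁻¹ := by
          field_simp
        rw [hc1, hc2, ← smul_add, ← hxv]
    have hpE : p ∈ E := hEfin.mem_toFinset.mp hp
    rw [hEdef, mem_extremePoints] at hpE
    have hyC : hat y ∈ C := subset_convexHull ℝ _ (by
      simp only [hShdef, coe_image, Set.mem_image]; exact ⟨y, hy, rfl⟩)
    have hzC : hat z ∈ C := subset_convexHull ℝ _ (by
      simp only [hShdef, coe_image, Set.mem_image]; exact ⟨z, hz, rfl⟩)
    obtain ⟨h1, h2⟩ := hpE.2 (hat y) hyC (hat z) hzC hseg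
    have hfy : f y ≤ f x := hgmax y hy h1
    have hfz : f z ≤ f x := hgmax z hz h2
    have : ψ x ≤ ψ y := by simp only [hψdef]; linarith
    have : ψ x ≤ ψ z := by simp only [hψdef]; linarith
    linarith

theorem freiman_key {D : ℕ} : ∀ A : Finset (Fin D → ℝ), A.Nonempty →
    2 * (finrank ℝ (vectorSpan ℝ (A : Set (Fin D → ℝ))) + 1) * A.card ≤
      2 * (A + A).card +
        finrank ℝ (vectorSpan ℝ (A : Set (Fin D → ℝ))) *
          (finrank ℝ (vectorSpan ℝ (A : Set (Fin D → ℝ))) + 1) := by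
  classical
  intro A
  induction A using Finset.strongInduction with
  | _ A ih =>
    intro hA
    set r := finrank ℝ (vectorSpan ℝ (A : Set (Fin D → ℝ))) with hrdef
    obtain ⟨f, hfinj⟩ := exists_injOn_functional A
    obtain ⟨v, hv, hvmax⟩ := A.exists_max_image f hA
    by_cases hcard1 : A.card ≤ 1
    · -- singleton case
      have hA1 : A = {v} := by
        apply Finset.eq_singleton_iff_unique_mem.mpr
        exact ⟨hv, fun x hx => Finset.card_le_one.mp hcard1 x hx v hv⟩
      have hr0 : r = 0 := by
        rw [hrdef, hA1]
        rw [Finset.coe_singleton, vectorSpan_singleton, finrank_bot]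
      have hAA : A + A = {v + v} := by rw [hA1, Finset.singleton_add_singleton]
      rw [hr0, hAA, hA1]
      simp
    · push_neg at hcard1
      set A' := A.erase v with hA'def
      have hA'card : A'.card + 1 = A.card := by
        rw [hA'def, Finset.card_erase_of_mem hv]; omega
      have hA'ne : A'.Nonempty := Finset.card_pos.mp (by omega)
      have hssub : A' ⊂ A := Finset.erase_ssubset hv
      set r' := finrank ℝ (vectorSpan ℝ (A' : Set (Fin D → ℝ))) with hr'def
      have hr'le : r' ≤ r := Submodule.finrank_mono
        (vectorSpan_mono ℝ (by exact_mod_cast Finset.erase_subset v A))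
      obtain ⟨a₀, ha₀⟩ := id hA'ne
      have hrle : r ≤ r' + 1 := rank_le_erase_rank_add_one A v ha₀
      have hvstrict : ∀ x ∈ A', f x < f v := by
        intro x hx
        refine lt_of_le_of_ne (hvmax x (Finset.mem_of_mem_erase hx)) (fun h => ?_)
        exact (Finset.ne_of_mem_erase hx) (hfinj (by exact_mod_cast Finset.mem_of_mem_erase hx)
          (by exact_mod_cast hv) h)
      have IH := ih A' hssub hA'ne
      rw [← hr'def] at IH
      have hsubsums : A' + A' ⊆ A + A :=
        Finset.add_subset_add (Finset.erase_subset v A) (Finset.erase_subset v A)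
      have hvv_notin : v + v ∉ A' + A' := by
        intro hmem
        rw [Finset.mem_add] at hmem
        obtain ⟨y, hy, z, hz, hyz⟩ := hmem
        have h1 := hvstrict y hy
        have h2 := hvstrict z hz
        have : f (y + z) = f (v + v) := by rw [hyz]
        simp only [map_add] at this
        linarith
      by_cases hcase : r' + 1 ≤ r
      · -- hyperplane case : r = r' + 1
        have hrr : r = r' + 1 := le_antisymm hrle hcase
        have hnmem : v - a₀ ∉ vectorSpan ℝ (A' : Set (Fin D → ℝ)) := by
          intro hmem
          have hle : vectorSpan ℝ (A : Set (Fin D → ℝ)) ≤ vectorSpan ℝ (A' : Set (Fin D → ℝ)) := by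
            rw [vectorSpan_eq_span_vsub_set_right ℝ
              (show a₀ ∈ (A : Set (Fin D → ℝ)) by exact_mod_cast Finset.mem_of_mem_erase ha₀)]
            rw [Submodule.span_le]
            rintro w ⟨x, hx, rfl⟩
            by_cases hxv : x = v
            · subst hxv; simpa [vsub_eq_sub] using hmem
            · exact vsub_mem_vectorSpan ℝ
                (by exact_mod_cast Finset.mem_erase.mpr ⟨hxv, by exact_mod_cast hx⟩)
                (by exact_mod_cast ha₀)
          have : r ≤ r' := Submodule.finrank_mono hle
          omega
        obtain ⟨g, hgv, hgker⟩ := Submodule.exists_dual_map_eq_bot_of_notMem hnmem inferInstance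
        have hker : ∀ w ∈ vectorSpan ℝ (A' : Set (Fin D → ℝ)), g w = 0 := by
          intro w hw
          have : g w ∈ Submodule.map g (vectorSpan ℝ (A' : Set (Fin D → ℝ))) :=
            Submodule.mem_map_of_mem hw
          rw [hgker] at this
          simpa using this
        have hgval : ∀ x ∈ A', g x = g a₀ := by
          intro x hx
          have : g (x - a₀) = 0 := hker _ (by
            have := vsub_mem_vectorSpan ℝ (show x ∈ (A' : Set (Fin D → ℝ)) by exact_mod_cast hx)
              (show a₀ ∈ (A' : Set (Fin D → ℝ)) by exact_mod_cast ha₀)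
            simpa [vsub_eq_sub] using this)
          rw [map_sub] at this
          linarith
        set c := g (v - a₀) with hcdef
        have hgvv : g v = g a₀ + c := by rw [hcdef, map_sub]; ring
        have hval_AA : ∀ s ∈ A' + A', g s = 2 * g a₀ := by
          intro s hs
          rw [Finset.mem_add] at hs
          obtain ⟨y, hy, z, hz, rfl⟩ := hs
          rw [map_add, hgval y hy, hgval z hz]; ring
        set B₂ := A'.image (fun x => v + x) with hB₂def
        have hval_B₂ : ∀ s ∈ B₂, g s = 2 * g a₀ + c := by
          intro s hs
          obtain ⟨x, hx, rfl⟩ := Finset.mem_image.mp hs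
          rw [map_add, hgval x hx, hgvv]; ring
        have hdisj1 : Disjoint (A' + A') B₂ := by
          rw [Finset.disjoint_left]
          intro s hs1 hs2
          have := hval_AA s hs1
          have := hval_B₂ s hs2
          apply hgv; linarith
        have hdisj2 : Disjoint (A' + A' ∪ B₂) {v + v} := by
          rw [Finset.disjoint_right]
          intro s hs1 hs2
          rw [Finset.mem_singleton] at hs1
          subst hs1
          have hgvvval : g (v + v) = 2 * g a₀ + 2 * c := by rw [map_add, hgvv]; ring
          rcases Finset.mem_union.mp hs2 with h | h
          · have := hval_AA _ h; apply hgv; linarith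
          · have := hval_B₂ _ h; apply hgv; linarith
        have hsub2 : A' + A' ∪ B₂ ∪ {v + v} ⊆ A + A := by
          intro s hs
          rcases Finset.mem_union.mp hs with hs | hs
          · rcases Finset.mem_union.mp hs with hs | hs
            · exact hsubsums hs
            · obtain ⟨x, hx, rfl⟩ := Finset.mem_image.mp hs
              exact Finset.add_mem_add hv (Finset.mem_of_mem_erase hx)
          · rw [Finset.mem_singleton] at hs; subst hs
            exact Finset.add_mem_add hv hv
        have hcard2 : (A' + A').card + A'.card + 1 ≤ (A + A).card := by
          have h1 : (A' + A' ∪ B₂ ∪ {v + v}).card = (A' + A').card + A'.card + 1 := by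
            rw [Finset.card_union_of_disjoint hdisj2, Finset.card_union_of_disjoint hdisj1]
            rw [Finset.card_image_of_injective _ (add_right_injective v), Finset.card_singleton]
          rw [← h1]
          exact Finset.card_le_card hsub2
        -- arithmetic
        rw [hrr]
        nlinarith [hcard2, IH, hA'card]
      · -- full-rank case : r' = r
        have hrr : r' = r := by omega
        obtain ⟨T, hTsub, hTcard, hTnew⟩ := visibility A' hA'ne v f hvstrict
        rw [← hr'def] at hTcard
        set B₂ := T.image (fun x => v + x) with hB₂def
        have hdisj1 : Disjoint (A' + A') B₂ := by
          rw [Finset.disjoint_right]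
          intro s hs1 hs2
          obtain ⟨x, hx, rfl⟩ := Finset.mem_image.mp hs1
          exact hTnew x hx hs2
        have hdisj2 : Disjoint (A' + A' ∪ B₂) {v + v} := by
          rw [Finset.disjoint_right]
          intro s hs1 hs2
          rw [Finset.mem_singleton] at hs1
          subst hs1
          rcases Finset.mem_union.mp hs2 with h | h
          · exact hvv_notin h
          · obtain ⟨x, hx, hxx⟩ := Finset.mem_image.mp h
            have : x = v := by
              have := add_left_cancel hxx
              exact this
            subst this
            exact Finset.notMem_erase x A (hTsub hx)
        have hsub2 : A' + A' ∪ B₂ ∪ {v + v} ⊆ A + A := by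
          intro s hs
          rcases Finset.mem_union.mp hs with hs | hs
          · rcases Finset.mem_union.mp hs with hs | hs
            · exact hsubsums hs
            · obtain ⟨x, hx, rfl⟩ := Finset.mem_image.mp hs
              exact Finset.add_mem_add hv (Finset.mem_of_mem_erase (hTsub hx))
          · rw [Finset.mem_singleton] at hs; subst hs
            exact Finset.add_mem_add hv hv
        have hcard2 : (A' + A').card + r + 1 ≤ (A + A).card := by
          have h1 : (A' + A' ∪ B₂ ∪ {v + v}).card = (A' + A').card + T.card + 1 := by
            rw [Finset.card_union_of_disjoint hdisj2, Finset.card_union_of_disjoint hdisj1]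
            rw [Finset.card_image_of_injective _ (add_right_injective v), Finset.card_singleton]
          have h2 := Finset.card_le_card hsub2
          rw [h1] at h2
          have : r ≤ T.card := by omega
          omega
        nlinarith [hcard2, IH, hA'card, hrr]

theorem card_image_eq_card_image {α β γ : Type*} [DecidableEq β] [DecidableEq γ]
    (s : Finset α) (f : α → β) (g : α → γ)
    (h : ∀ p ∈ s, ∀ q ∈ s, (f p = f q ↔ g p = g q)) :
    (s.image f).card = (s.image g).card := by
  classical
  refine Finset.card_bij (fun b hb => g (Finset.mem_image.mp hb).choose) ?_ ?_ ?_
  · intro b hb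
    have hc := (Finset.mem_image.mp hb).choose_spec
    exact Finset.mem_image_of_mem g hc.1
  · intro b₁ hb₁ b₂ hb₂ heq
    have h1 := (Finset.mem_image.mp hb₁).choose_spec
    have h2 := (Finset.mem_image.mp hb₂).choose_spec
    rw [← h1.2, ← h2.2]
    exact (h _ h1.1 _ h2.1).mpr heq
  · intro c hc
    obtain ⟨a, ha, rfl⟩ := Finset.mem_image.mp hc
    refine ⟨f a, Finset.mem_image_of_mem f ha, ?_⟩
    have h1 := (Finset.mem_image.mp (Finset.mem_image_of_mem f ha)).choose_spec
    exact (h _ h1.1 _ ha).mp h1.2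

theorem iso_cards {G H : Type*} [AddCommGroup G] [AddCommGroup H] [DecidableEq G] [DecidableEq H]
    {X : Finset G} {B : Finset H} (h : IsFreimanIso X B) :
    X.card = B.card ∧ (X + X).card = (B + B).card := by
  classical
  obtain ⟨φ, hbij, hiso⟩ := h
  constructor
  · refine Finset.card_bij (fun a _ => φ a) ?_ ?_ ?_
    · intro a ha; exact_mod_cast hbij.mapsTo (by exact_mod_cast ha)
    · intro a ha b hb hab
      exact hbij.injOn (by exact_mod_cast ha) (by exact_mod_cast hb) hab
    · intro b hb
      obtain ⟨a, ha, rfl⟩ := hbij.surjOn (show b ∈ (B : Set H) by exact_mod_cast hb)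
      exact ⟨a, by exact_mod_cast ha, rfl⟩
  · have h1 : X + X = (X ×ˢ X).image (fun p => p.1 + p.2) := by
      ext s
      simp only [Finset.mem_add, Finset.mem_image, Finset.mem_product, Prod.exists]
      constructor
      · rintro ⟨y, hy, z, hz, rfl⟩; exact ⟨y, z, ⟨hy, hz⟩, rfl⟩
      · rintro ⟨y, z, ⟨hy, hz⟩, rfl⟩; exact ⟨y, hy, z, hz, rfl⟩
    have h2 : B + B = (X ×ˢ X).image (fun p => φ p.1 + φ p.2) := by
      ext s
      simp only [Finset.mem_add, Finset.mem_image, Finset.mem_product, Prod.exists]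
      constructor
      · rintro ⟨y, hy, z, hz, rfl⟩
        obtain ⟨a, ha, rfl⟩ := hbij.surjOn (show y ∈ (B : Set H) by exact_mod_cast hy)
        obtain ⟨b, hb, rfl⟩ := hbij.surjOn (show z ∈ (B : Set H) by exact_mod_cast hz)
        exact ⟨a, b, ⟨by exact_mod_cast ha, by exact_mod_cast hb⟩, rfl⟩
      · rintro ⟨y, z, ⟨hy, hz⟩, rfl⟩
        refine ⟨φ y, ?_, φ z, ?_, rfl⟩
        · exact_mod_cast hbij.mapsTo (by exact_mod_cast hy)
        · exact_mod_cast hbij.mapsTo (by exact_mod_cast hz)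
    rw [h1, h2]
    apply card_image_eq_card_image
    rintro ⟨a, b⟩ hp ⟨a', b'⟩ hq
    rw [Finset.mem_product] at hp hq
    exact hiso a hp.1 b hp.2 a' hq.1 b' hq.2

theorem bridge {d : ℕ} (B : Finset (Fin d → ℤ)) (hB : B.Nonempty) (hfr : FullRank B) :
    d + 1 ≤ B.card ∧ 2 * (d + 1) * B.card ≤ 2 * (B + B).card + d * (d + 1) := by
  classical
  set ι : (Fin d → ℤ) →+ (Fin d → ℝ) :=
    { toFun := fun v i => (v i : ℝ)
      map_zero' := by funext i; simp
      map_add' := by intro x y; funext i; push_cast; simp } with hιdef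
  have hinj : Function.Injective ι := by
    intro x y hxy
    funext i
    have h := congrFun hxy i
    have h2 : ((x i : ℝ)) = (y i : ℝ) := h
    exact_mod_cast h2
  set Bℝ : Finset (Fin d → ℝ) := B.image ι with hBRdef
  have hBRne : Bℝ.Nonempty := hB.image ι
  have hcard : Bℝ.card = B.card := Finset.card_image_of_injective _ hinj
  have hsum : Bℝ + Bℝ = (B + B).image ι := (Finset.image_add _).symm
  have hsumcard : (Bℝ + Bℝ).card = (B + B).card := by
    rw [hsum, Finset.card_image_of_injective _ hinj]
  have hcoe : (Bℝ : Set (Fin d → ℝ)) = (fun v : Fin d → ℤ => fun i => (v i : ℝ)) '' ↑B := by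
    rw [hBRdef, Finset.coe_image]
    rfl
  have hrank : finrank ℝ (vectorSpan ℝ (Bℝ : Set (Fin d → ℝ))) = d := by
    have h1 : affineSpan ℝ (Bℝ : Set (Fin d → ℝ)) = ⊤ := by rw [hcoe]; exact hfr
    have h2 : vectorSpan ℝ (Bℝ : Set (Fin d → ℝ)) = ⊤ := by
      rw [← direction_affineSpan ℝ (Bℝ : Set (Fin d → ℝ)), h1]
      exact AffineSubspace.direction_top ℝ _ _
    rw [h2, finrank_top]
    simp [finrank_pi]
  constructor
  · have h3 : finrank ℝ (vectorSpan ℝ (Bℝ : Set (Fin d → ℝ))) ≤ Bℝ.card - 1 := by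
      have := finrank_vectorSpan_image_finset_le ℝ (id : (Fin d → ℝ) → (Fin d → ℝ)) Bℝ
        (n := Bℝ.card - 1) (by have := hBRne.card_pos; omega)
      rwa [Finset.image_id] at this
    rw [hrank] at h3
    have := hBRne.card_pos
    omega
  · have h4 := freiman_key Bℝ hBRne
    rw [hrank, hcard, hsumcard] at h4
    exact h4

theorem freimanDim_lt_two_mul_of_small_doubling
    (n : ℕ) (hn : 0 < n) (X : Finset (ZMod n)) (hX : X.Nonempty)
    (K : ℝ) (hK : 1 ≤ K) (hdoub : ((X + X).card : ℝ) ≤ K * X.card) :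
    (freimanDim X : ℝ) < 2 * K := by
  classical
  have hbound : ∀ d ∈ {d : ℕ | ∃ B : Finset (Fin d → ℤ), FullRank B ∧ IsFreimanIso X B},
      (d : ℝ) < 2 * K := by
    rintro d ⟨B, hfr, hiso⟩
    obtain ⟨hc1, hc2⟩ := iso_cards hiso
    have hBne : B.Nonempty := Finset.card_pos.mp (hc1 ▸ hX.card_pos)
    obtain ⟨hd1, hd2⟩ := bridge B hBne hfr
    rw [← hc1] at hd1
    rw [← hc1, ← hc2] at hd2
    have hx0 : (0:ℝ) < X.card := by exact_mod_cast hX.card_pos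
    have h1 : (2:ℝ) * ((d:ℝ) + 1) * X.card ≤ 2 * ((X + X).card : ℝ) + d * (d + 1) := by
      exact_mod_cast hd2
    have h3 : ((d:ℝ) + 1) ≤ X.card := by exact_mod_cast hd1
    have h5 : (d:ℝ) * ((d:ℝ) + 1) ≤ d * X.card :=
      mul_le_mul_of_nonneg_left h3 (Nat.cast_nonneg d)
    have h6 : (d:ℝ) * X.card < 2 * K * X.card := by nlinarith [hdoub]
    exact lt_of_mul_lt_mul_right h6 hx0.le
  rw [freimanDim]
  by_cases hne : {d : ℕ | ∃ B : Finset (Fin d → ℤ), FullRank B ∧ IsFreimanIso X B}.Nonempty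
  · have hbdd : BddAbove {d : ℕ | ∃ B : Finset (Fin d → ℤ), FullRank B ∧ IsFreimanIso X B} :=
      ⟨⌊2 * K⌋₊, fun d hd => Nat.le_floor (le_of_lt (hbound d hd))⟩
    exact hbound _ (Nat.sSup_mem hne hbdd)
  · rw [Set.not_nonempty_iff_eq_empty] at hne
    rw [hne, csSup_empty]
    have : ((⊥ : ℕ) : ℝ) = 0 := by norm_num
    rw [this]
    linarith
end

section
/- Let G be an abelian group and let T', X be finite nonempty subsets of G. Then for every integer t with 1 ≤ t ≤ |T'|, there exists a subset T ⊆ T' of size |T| = t such that |T + X| ≥ (t/|T'|)·|T' + X|. -/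
open Pointwise

private lemma key_erase {G : Type*} [AddCommGroup G] [DecidableEq G] (T' X : Finset G)
    (hT' : T'.Nonempty) :
    ∃ a ∈ T', ((T'.card : ℝ) - 1) / (T'.card : ℝ) * ((T' + X).card : ℝ)
      ≤ (((T'.erase a) + X).card : ℝ) := by
  classical
  set S := T' + X with hS
  have hchoice : ∀ x ∈ S, ∃ a ∈ T', ∃ b ∈ X, a + b = x := by
    intro x hx
    exact Finset.mem_add.mp hx
  let f : G → G := fun x => if h : ∃ a ∈ T', ∃ b ∈ X, a + b = x
    then h.choose else hT'.choose
  have hf1 : ∀ x ∈ S, f x ∈ T' := by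
    intro x hx
    have h := hchoice x hx
    simp only [f, dif_pos h]
    exact h.choose_spec.1
  have hf2 : ∀ x ∈ S, ∃ b ∈ X, f x + b = x := by
    intro x hx
    have h := hchoice x hx
    simp only [f, dif_pos h]
    exact h.choose_spec.2
  have hsum : ∑ a ∈ T', (S.filter fun x => f x = a).card = S.card :=
    (Finset.card_eq_sum_card_fiberwise hf1).symm
  have hcardpos : (0:ℝ) < T'.card := by
    exact_mod_cast Finset.card_pos.mpr hT'
  have hsumle : ∑ a ∈ T', ((S.filter fun x => f x = a).card : ℝ)
      ≤ ∑ a ∈ T', (S.card : ℝ) / T'.card := by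
    rw [Finset.sum_const, nsmul_eq_mul, mul_div_cancel₀ _ (ne_of_gt hcardpos)]
    rw [← Nat.cast_sum, hsum]
  obtain ⟨a, ha, hle⟩ := Finset.exists_le_of_sum_le hT' hsumle
  refine ⟨a, ha, ?_⟩
  have hsub : S.filter (fun x => ¬ (f x = a)) ⊆ (T'.erase a) + X := by
    intro x hx
    rw [Finset.mem_filter] at hx
    obtain ⟨hxS, hxa⟩ := hx
    obtain ⟨b, hb, hfb⟩ := hf2 x hxS
    exact Finset.mem_add.mpr ⟨f x, Finset.mem_erase.mpr ⟨hxa, hf1 x hxS⟩, b, hb, hfb⟩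
  have hcount : (S.filter fun x => f x = a).card
      + (S.filter fun x => ¬ (f x = a)).card = S.card :=
    Finset.card_filter_add_card_filter_not _
  have hge : (S.card : ℝ) - (S.card : ℝ) / T'.card
      ≤ (((T'.erase a) + X).card : ℝ) := by
    have h1 : ((S.filter fun x => ¬ (f x = a)).card : ℝ)
        ≤ (((T'.erase a) + X).card : ℝ) := by
      exact_mod_cast Finset.card_le_card hsub
    have h2 : (S.card : ℝ) - (S.card : ℝ) / T'.card
        ≤ ((S.filter fun x => ¬ (f x = a)).card : ℝ) := by
      have : ((S.filter fun x => ¬ (f x = a)).card : ℝ)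
          = (S.card : ℝ) - ((S.filter fun x => f x = a).card : ℝ) := by
        have := hcount
        push_cast [← this]
        ring
      rw [this]
      linarith
    linarith
  have : ((T'.card : ℝ) - 1) / (T'.card : ℝ) * (S.card : ℝ)
      = (S.card : ℝ) - (S.card : ℝ) / T'.card := by
    field_simp
  rw [this]
  exact hge

theorem exists_subset_card_eq_sumset_large {G : Type*} [AddCommGroup G] [DecidableEq G]
    (T' X : Finset G) (hT' : T'.Nonempty) (hX : X.Nonempty)
    (t : ℕ) (ht1 : 1 ≤ t) (ht2 : t ≤ T'.card) :
    ∃ T ⊆ T', T.card = t ∧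
      ((t : ℝ) / (T'.card : ℝ)) * ((T' + X).card : ℝ) ≤ ((T + X).card : ℝ) := by
  classical
  obtain ⟨n, hn⟩ : ∃ n, T'.card = t + n := ⟨T'.card - t, by omega⟩
  clear ht2
  induction' n with n ih generalizing T'
  · refine ⟨T', Finset.Subset.refl _, by omega, ?_⟩
    rw [hn]
    have ht0 : (t:ℝ) ≠ 0 := by positivity
    push_cast
    rw [add_zero, div_self ht0, one_mul]
  · obtain ⟨a, ha, hkey⟩ := key_erase T' X hT'
    set T'' := T'.erase a with hT''
    have hcard'' : T''.card = t + n := by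
      rw [hT'', Finset.card_erase_of_mem ha]; omega
    have hT''ne : T''.Nonempty := Finset.card_pos.mp (by omega)
    obtain ⟨T, hTsub, hTcard, hineq⟩ := ih T'' hT''ne hcard''
    refine ⟨T, hTsub.trans (Finset.erase_subset _ _), hTcard, ?_⟩
    have hpos1 : (0:ℝ) < (t:ℝ) + n := by positivity
    have hpos2 : (0:ℝ) < (t:ℝ) + n + 1 := by positivity
    have hkey' : ((t:ℝ) + n) / ((t:ℝ) + n + 1) * ((T' + X).card : ℝ)
        ≤ ((T'' + X).card : ℝ) := by
      have : ((T'.card : ℝ) - 1) = (t:ℝ) + n := by rw [hn]; push_cast; ring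
      rw [this, hn] at hkey
      push_cast at hkey ⊢
      convert hkey using 3 <;> ring
    have hineq' : ((t:ℝ) / ((t:ℝ) + n)) * ((T'' + X).card : ℝ) ≤ ((T + X).card : ℝ) := by
      rw [hcard''] at hineq
      push_cast at hineq
      exact hineq
    rw [hn]
    push_cast
    rw [show (t:ℝ) + ((n:ℝ) + 1) = (t:ℝ) + n + 1 by ring]
    calc (t:ℝ) / ((t:ℝ) + n + 1) * ((T' + X).card : ℝ)
        = ((t:ℝ) / ((t:ℝ) + n)) * (((t:ℝ) + n) / ((t:ℝ) + n + 1) * ((T' + X).card : ℝ)) := by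
          field_simp
      _ ≤ ((t:ℝ) / ((t:ℝ) + n)) * ((T'' + X).card : ℝ) := by
          apply mul_le_mul_of_nonneg_left hkey'
          positivity
      _ ≤ ((T + X).card : ℝ) := hineq'
end
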